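/- Let O ⊆ X be the set of elements of the form ω + Σ_{v∈P} Σ_{j∈ℤ/f_vℤ} Σ_{i=1}^{m} a^j_{v,i}·ε^j_{v,i} with every a^j_{v,i} ∈ {−1, 0} (the Weyl orbit of the minuscule cocharacter ω), and let λ₀ := ω − Σ_{v∈P} ( ⌈f_v/2⌉ · Σ_{1≤i≤m, i odd} ε^{0}_{v,i} + ⌊f_v/2⌋ · Σ_{1≤i≤m, i even} ε^{0}_{v,i} ). Then the number of elements λ ∈ O with λ − λ₀ ∈ (1 − σ)(X) equals ∏_{v∈P} (f_v choose ⌊f_v/2⌋)^m. -/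

import Mathlib

open Finset

/-- Index set for the basis of the cocharacter lattice `X`: `none` is `ω`,
`some ⟨v, (j, i)⟩` is `ε^j_{v,i}` (with `i : Fin m` encoding the index `i+1 ∈ {1,…,m}`). -/
abbrev XIdx (P : Type) (f : P → ℕ) (m : ℕ) := Option ((v : P) × (ZMod (f v) × Fin m))

/-- The free `ℤ`-module `X` with basis `ω, ε^j_{v,i}`. -/
abbrev XZ (P : Type) (f : P → ℕ) (m : ℕ) := XIdx P f m →₀ ℤ

/-- The index shift underlying `σ`: `σ(ω) = ω`, `σ(ε^j_{v,i}) = ε^{j+1}_{v,i}`. -/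
def xShift (P : Type) (f : P → ℕ) (m : ℕ) : XIdx P f m → XIdx P f m
  | none => none
  | some ⟨v, (j, i)⟩ => some ⟨v, (j + 1, i)⟩

/-- The automorphism `σ` of `X`. -/
noncomputable def sigmaZ (P : Type) (f : P → ℕ) (m : ℕ) : Module.End ℤ (XZ P f m) :=
  Finsupp.lmapDomain ℤ ℤ (xShift P f m)

/-- The Weyl orbit `O` of the minuscule cocharacter `ω`: elements
`ω + Σ a^j_{v,i} ε^j_{v,i}` with all `a^j_{v,i} ∈ {−1, 0}`. -/
def weylOrbit (P : Type) (f : P → ℕ) (m : ℕ) : Set (XZ P f m) :=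
  {x | x none = 1 ∧
    ∀ t : (v : P) × (ZMod (f v) × Fin m), x (some t) = -1 ∨ x (some t) = 0}

/-- `λ₀ = ω − Σ_v (⌈f_v/2⌉·Σ_{i odd} ε^0_{v,i} + ⌊f_v/2⌋·Σ_{i even} ε^0_{v,i})`. -/
noncomputable def lamZeroZ (P : Type) [Fintype P] (f : P → ℕ) [∀ v, NeZero (f v)] (m : ℕ) :
    XZ P f m :=
  Finsupp.single none 1 -
    ∑ v : P,
      ((((f v + 1) / 2 : ℕ) : ℤ) •
          ∑ i ∈ univ.filter (fun i : Fin m => Odd ((i : ℕ) + 1)),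
            Finsupp.single (some ⟨v, ((0 : ZMod (f v)), i)⟩) (1 : ℤ) +
        (((f v / 2 : ℕ) : ℤ) •
          ∑ i ∈ univ.filter (fun i : Fin m => Even ((i : ℕ) + 1)),
            Finsupp.single (some ⟨v, ((0 : ZMod (f v)), i)⟩) (1 : ℤ)))

section Aux

variable {P : Type} {f : P → ℕ} {m : ℕ}

lemma xShift_injective : Function.Injective (xShift P f m) := by
  rintro (_ | ⟨v, j, i⟩) (_ | ⟨v', j', i'⟩) h <;> simp [xShift] at h ⊢
  obtain ⟨rfl, h2⟩ := h
  simp at h2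
  obtain ⟨h2, rfl⟩ := h2
  simpa using h2

lemma sigmaZ_apply_none (x : XZ P f m) : sigmaZ P f m x none = x none := by
  have := Finsupp.mapDomain_apply (xShift_injective (P := P) (f := f) (m := m)) x none
  simpa [sigmaZ, xShift] using this

lemma sigmaZ_apply_some (x : XZ P f m) (v : P) (j : ZMod (f v)) (i : Fin m) :
    sigmaZ P f m x (some ⟨v, (j, i)⟩) = x (some ⟨v, (j - 1, i)⟩) := by
  have := Finsupp.mapDomain_apply (xShift_injective (P := P) (f := f) (m := m)) x
    (some ⟨v, (j - 1, i)⟩)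
  simpa [sigmaZ, xShift, sub_add_cancel] using this

lemma sum_zmod {n : ℕ} [NeZero n] (F : ZMod n → ℤ) :
    ∑ j : ZMod n, F j = ∑ k ∈ Finset.range n, F (k : ZMod n) := by
  rw [← Fin.sum_univ_eq_sum_range]
  exact (Fintype.sum_bijective (fun k : Fin n => ((k : ℕ) : ZMod n))
    (by
      constructor
      · intro a b h
        have := congrArg ZMod.val h
        rwa [ZMod.val_cast_of_lt a.isLt, ZMod.val_cast_of_lt b.isLt, Fin.val_inj] at this
      · intro a
        exact ⟨⟨a.val, ZMod.val_lt a⟩, ZMod.natCast_rightInverse a⟩)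
    _ _ (fun k => rfl)).symm

variable [Fintype P] [∀ v, NeZero (f v)]

lemma mem_range_iff (y : XZ P f m) :
    y ∈ LinearMap.range ((1 : Module.End ℤ (XZ P f m)) - sigmaZ P f m) ↔
      y none = 0 ∧ ∀ (v : P) (i : Fin m), ∑ j : ZMod (f v), y (some ⟨v, (j, i)⟩) = 0 := by
  classical
  constructor
  · rintro ⟨x, rfl⟩
    refine ⟨by simp [sigmaZ_apply_none], fun v i => ?_⟩
    have h1 : ∀ j : ZMod (f v),
        ((1 : Module.End ℤ (XZ P f m)) - sigmaZ P f m) x (some ⟨v, (j, i)⟩)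
          = x (some ⟨v, (j, i)⟩) - x (some ⟨v, (j - 1, i)⟩) := by
      intro j; simp [sigmaZ_apply_some]
    rw [Finset.sum_congr rfl (fun j _ => h1 j), Finset.sum_sub_distrib]
    have h2 : ∑ j : ZMod (f v), x (some ⟨v, (j - 1, i)⟩)
        = ∑ j : ZMod (f v), x (some ⟨v, (j, i)⟩) :=
      Fintype.sum_equiv (Equiv.subRight (1 : ZMod (f v))) _ _ (fun j => rfl)
    rw [h2, sub_self]
  · rintro ⟨h1, h2⟩
    set g : XIdx P f m → ℤ := fun t =>
      match t with
      | none => 0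
      | some ⟨v, (j, i)⟩ => ∑ k ∈ Finset.range (j.val + 1), y (some ⟨v, ((k : ZMod (f v)), i)⟩)
      with hg
    refine ⟨Finsupp.equivFunOnFinite.symm g, ?_⟩
    ext t
    have hsub : ∀ t, ((1 : Module.End ℤ (XZ P f m)) - sigmaZ P f m)
        (Finsupp.equivFunOnFinite.symm g) t
        = (Finsupp.equivFunOnFinite.symm g) t - sigmaZ P f m (Finsupp.equivFunOnFinite.symm g) t := by
      intro t; simp
    match t with
    | none =>
      rw [hsub, sigmaZ_apply_none, sub_self, h1]
    | some ⟨v, (j, i)⟩ =>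
      rw [hsub, sigmaZ_apply_some]
      rw [Finsupp.coe_equivFunOnFinite_symm]
      show (∑ k ∈ Finset.range (j.val + 1), y (some ⟨v, ((k : ZMod (f v)), i)⟩))
        - (∑ k ∈ Finset.range ((j - 1).val + 1), y (some ⟨v, ((k : ZMod (f v)), i)⟩))
        = y (some ⟨v, (j, i)⟩)
      by_cases hj : j = 0
      · subst hj
        have hfv : 1 ≤ f v := Nat.one_le_iff_ne_zero.mpr (NeZero.ne (f v))
        have hval : (0 - 1 : ZMod (f v)).val = f v - 1 := by
          have : (0 - 1 : ZMod (f v)) = ((f v - 1 : ℕ) : ZMod (f v)) := by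
            push_cast [hfv]
            simp
          rw [this, ZMod.val_cast_of_lt (by omega)]
        rw [hval]
        have hrange : f v - 1 + 1 = f v := by omega
        rw [hrange]
        have htot := h2 v i
        rw [sum_zmod] at htot
        rw [htot]
        simp [ZMod.val_zero]
      · have hpos : 0 < j.val := ZMod.val_pos.mpr hj
        have hval : (j - 1).val = j.val - 1 := by
          have hj1 : (j - 1 : ZMod (f v)) = ((j.val - 1 : ℕ) : ZMod (f v)) := by
            push_cast [hpos]
            rw [ZMod.natCast_rightInverse j]
          rw [hj1, ZMod.val_cast_of_lt (by have := ZMod.val_lt j; omega)]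
        rw [hval]
        have h3 : j.val - 1 + 1 = j.val := by omega
        rw [h3, Finset.sum_range_succ, ZMod.natCast_rightInverse j]
        ring

lemma lamZero_none : lamZeroZ P f m none = 1 := by
  classical
  simp [lamZeroZ, Finsupp.single_apply, Finsupp.finset_sum_apply]

/-- The target count for coordinate `(v, i)`. -/
def kk (f : P → ℕ) (v : P) (i : Fin m) : ℕ :=
  if Odd ((i : ℕ) + 1) then (f v + 1) / 2 else f v / 2

lemma lamZero_some (v : P) (j : ZMod (f v)) (i : Fin m) :
    lamZeroZ P f m (some ⟨v, (j, i)⟩) = if j = 0 then -(kk f v i : ℤ) else 0 := by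
  classical
  have key : ∀ (v' : P) (i' : Fin m),
      ((Finsupp.single (some ⟨v', ((0 : ZMod (f v')), i')⟩) (1 : ℤ) : XZ P f m))
        (some ⟨v, (j, i)⟩) = if v' = v ∧ j = 0 ∧ i' = i then 1 else 0 := by
    intro v' i'
    by_cases hv : v' = v
    · subst hv
      rw [Finsupp.single_apply]
      by_cases hji : j = 0 ∧ i' = i
      · obtain ⟨rfl, rfl⟩ := hji
        simp
      · rw [if_neg, if_neg (by tauto)]
        intro h
        have h1 : (⟨v', ((0 : ZMod (f v')), i')⟩ : (v : P) × (ZMod (f v) × Fin m))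
            = ⟨v', (j, i)⟩ := Option.some.inj h
        have h2 : ((0 : ZMod (f v')), i') = (j, i) := by simpa using h1
        exact hji ⟨(Prod.mk.inj h2).1.symm, (Prod.mk.inj h2).2⟩
    · rw [Finsupp.single_eq_of_ne, if_neg (by tauto)]
      intro h
      exact hv (congrArg Sigma.fst (Option.some.inj h)).symm
  have hs : ∀ (v' : P) (s : Finset (Fin m)),
      ∑ i' ∈ s, (if v' = v ∧ j = 0 ∧ i' = i then (1 : ℤ) else 0)
        = if v' = v ∧ j = 0 ∧ i ∈ s then 1 else 0 := by
    intro v' s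
    by_cases h : v' = v ∧ j = 0
    · simp only [h.1, h.2, true_and]
      rw [Finset.sum_ite_eq' s i (fun _ => (1 : ℤ))]
    · have h1 : ∀ i' : Fin m, ¬(v' = v ∧ j = 0 ∧ i' = i) := by tauto
      have h2 : ¬(v' = v ∧ j = 0 ∧ i ∈ s) := by tauto
      simp [h1, h2]
  simp only [lamZeroZ, Finsupp.sub_apply, Finsupp.finset_sum_apply, Finsupp.add_apply,
    Finsupp.smul_apply, smul_eq_mul, key, hs]
  rw [Finsupp.single_eq_of_ne (by simp)]
  rw [Finset.sum_eq_single v]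
  · by_cases hj : j = 0
    · subst hj
      simp only [true_and, if_true, eq_self_iff_true]
      rcases Nat.even_or_odd ((i : ℕ) + 1) with he | ho
      · have hno : ¬ Odd ((i : ℕ) + 1) := by simpa [Nat.not_odd_iff_even] using he
        simp [kk, he, hno]
      · have hne : ¬ Even ((i : ℕ) + 1) := by simpa [Nat.not_even_iff_odd] using ho
        simp [kk, ho, hne]
    · simp [hj]
  · intro b _ hb
    simp [hb]
  · simp

/-- Orbit sums of `lamZeroZ`. -/
lemma lamZero_sum (v : P) (i : Fin m) :
    ∑ j : ZMod (f v), lamZeroZ P f m (some ⟨v, (j, i)⟩) = -(kk f v i : ℤ) := by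
  classical
  simp only [lamZero_some]
  rw [Finset.sum_ite_eq' univ (0 : ZMod (f v)) (fun _ => -(kk f v i : ℤ))]
  simp



/-- The candidate orbit element attached to a family of subsets. -/
def mkFun (f : P → ℕ) (m : ℕ) (s : ∀ p : P × Fin m, Finset (ZMod (f p.1))) :
    XIdx P f m → ℤ
  | none => 1
  | some ⟨v, (j, i)⟩ => if j ∈ s (v, i) then -1 else 0

lemma mkFun_none (s : ∀ p : P × Fin m, Finset (ZMod (f p.1))) : mkFun f m s none = 1 := rfl

lemma mkFun_some (s : ∀ p : P × Fin m, Finset (ZMod (f p.1))) (v : P) (j : ZMod (f v))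
    (i : Fin m) : mkFun f m s (some ⟨v, (j, i)⟩) = if j ∈ s (v, i) then -1 else 0 := rfl

lemma sum_eq_neg_card [Fintype P] [∀ v, NeZero (f v)] (lam : XZ P f m)
    (ha : ∀ t : (v : P) × (ZMod (f v) × Fin m), lam (some t) = -1 ∨ lam (some t) = 0)
    (v : P) (i : Fin m) :
    ∑ j : ZMod (f v), lam (some ⟨v, (j, i)⟩)
      = -((univ.filter (fun j : ZMod (f v) => lam (some ⟨v, (j, i)⟩) = -1)).card : ℤ) := by
  classical
  have hpt : ∀ j : ZMod (f v), lam (some ⟨v, (j, i)⟩)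
      = if lam (some ⟨v, (j, i)⟩) = -1 then (-1 : ℤ) else 0 := by
    intro j
    rcases ha ⟨v, (j, i)⟩ with h | h
    · rw [if_pos h]; exact h
    · rw [if_neg (by simp [h])]; exact h
  rw [Finset.sum_congr rfl (fun j _ => hpt j), Finset.sum_ite, Finset.sum_const,
    Finset.sum_const_zero, add_zero]
  simp

end Aux


/-- the number of elements `λ` of the Weyl orbit of `ω` with
`λ − λ₀ ∈ (1 − σ)X` equals `∏_v (f_v choose ⌊f_v/2⌋)^m`. -/
theorem card_weylOrbit_congruent (P : Type) [Fintype P] [Nonempty P]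
    (f : P → ℕ) [∀ v, NeZero (f v)] (m : ℕ) (hm : 1 ≤ m) :
    Set.ncard {lam : XZ P f m | lam ∈ weylOrbit P f m ∧
        lam - lamZeroZ P f m ∈
          LinearMap.range ((1 : Module.End ℤ (XZ P f m)) - sigmaZ P f m)} =
      ∏ v : P, ((f v).choose (f v / 2)) ^ m := by
  classical
  set S : Set (XZ P f m) := {lam : XZ P f m | lam ∈ weylOrbit P f m ∧
        lam - lamZeroZ P f m ∈
          LinearMap.range ((1 : Module.End ℤ (XZ P f m)) - sigmaZ P f m)} with hS
  have hmem : ∀ lam : XZ P f m, lam ∈ S ↔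
      (lam none = 1 ∧ (∀ t : (v : P) × (ZMod (f v) × Fin m), lam (some t) = -1 ∨ lam (some t) = 0)) ∧
      ∀ (v : P) (i : Fin m),
        (univ.filter (fun j : ZMod (f v) => lam (some ⟨v, (j, i)⟩) = -1)).card = kk f v i := by
    intro lam
    rw [hS]
    simp only [Set.mem_setOf_eq, weylOrbit, mem_range_iff]
    have hsplit : ∀ (h0 : lam none = 1)
        (ha : ∀ t : (v : P) × (ZMod (f v) × Fin m), lam (some t) = -1 ∨ lam (some t) = 0)
        (v : P) (i : Fin m),
        ∑ j : ZMod (f v), (lam - lamZeroZ P f m) (some ⟨v, (j, i)⟩)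
          = -((univ.filter (fun j : ZMod (f v) => lam (some ⟨v, (j, i)⟩) = -1)).card : ℤ)
            + (kk f v i : ℤ) := by
      intro h0 ha v i
      simp only [Finsupp.sub_apply, Finset.sum_sub_distrib, lamZero_sum, sub_neg_eq_add,
        sum_eq_neg_card lam ha v i]
    constructor
    · rintro ⟨⟨h0, ha⟩, _, hsum⟩
      refine ⟨⟨h0, ha⟩, fun v i => ?_⟩
      have h := hsum v i
      rw [hsplit h0 ha v i] at h
      omega
    · rintro ⟨⟨h0, ha⟩, hcard⟩
      refine ⟨⟨h0, ha⟩, ?_, fun v i => ?_⟩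
      · simp [Finsupp.sub_apply, h0, lamZero_none]
      · rw [hsplit h0 ha v i, hcard v i]
        ring
  -- the equivalence with families of subsets
  let D := ∀ p : P × Fin m, {s : Finset (ZMod (f p.1)) // s.card = kk f p.1 p.2}
  let e : S ≃ D :=
    { toFun := fun lam => fun p =>
        ⟨univ.filter (fun j : ZMod (f p.1) => (lam : XZ P f m) (some ⟨p.1, (j, p.2)⟩) = -1),
          ((hmem lam).mp lam.2).2 p.1 p.2⟩
      invFun := fun s =>
        ⟨Finsupp.equivFunOnFinite.symm (mkFun f m (fun p => (s p).1)), by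
          rw [hmem]
          refine ⟨⟨?_, ?_⟩, ?_⟩
          · rw [Finsupp.coe_equivFunOnFinite_symm, mkFun_none]
          · rintro ⟨v, j, i⟩
            rw [Finsupp.coe_equivFunOnFinite_symm, mkFun_some]
            split_ifs with h
            · left; rfl
            · right; rfl
          · intro v i
            have hfil : (univ.filter (fun j : ZMod (f v) =>
                (Finsupp.equivFunOnFinite.symm (mkFun f m (fun p => (s p).1)))
                    (some ⟨v, (j, i)⟩) = -1)) = (s (v, i)).1 := by
              ext j
              rw [Finset.mem_filter, Finsupp.coe_equivFunOnFinite_symm, mkFun_some]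
              constructor
              · rintro ⟨-, h⟩
                by_contra hj
                rw [if_neg hj] at h
                norm_num at h
              · intro hj
                exact ⟨Finset.mem_univ j, by rw [if_pos hj]⟩
            rw [hfil]
            exact (s (v, i)).2⟩
      left_inv := by
        rintro ⟨lam, hlam⟩
        apply Subtype.ext
        apply Finsupp.ext
        rintro (_ | ⟨v, j, i⟩)
        · rw [Finsupp.coe_equivFunOnFinite_symm, mkFun_none]
          exact (((hmem lam).mp hlam).1.1).symm
        · rw [Finsupp.coe_equivFunOnFinite_symm, mkFun_some]
          rcases ((hmem lam).mp hlam).1.2 ⟨v, (j, i)⟩ with h | h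
          · rw [if_pos (Finset.mem_filter.mpr ⟨Finset.mem_univ j, h⟩), h]
          · rw [if_neg (fun hc => by rw [(Finset.mem_filter.mp hc).2] at h; norm_num at h), h]
      right_inv := by
        intro s
        funext p
        apply Subtype.ext
        obtain ⟨v, i⟩ := p
        ext j
        rw [Finset.mem_filter, Finsupp.coe_equivFunOnFinite_symm, mkFun_some]
        constructor
        · rintro ⟨-, h⟩
          by_contra hj
          rw [if_neg hj] at h
          norm_num at h
        · intro hj
          exact ⟨Finset.mem_univ j, by rw [if_pos hj]⟩ }
  rw [← Nat.card_coe_set_eq, Nat.card_congr e, Nat.card_pi]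
  have hfac : ∀ p : P × Fin m,
      Nat.card {s : Finset (ZMod (f p.1)) // s.card = kk f p.1 p.2}
        = (f p.1).choose (f p.1 / 2) := by
    rintro ⟨v, i⟩
    rw [Nat.card_eq_fintype_card, Fintype.card_finset_len, ZMod.card]
    by_cases h : Odd ((i : ℕ) + 1)
    · have h1 : kk f v i = f v - f v / 2 := by
        simp only [kk, if_pos h]; omega
      rw [h1, Nat.choose_symm (Nat.div_le_self _ _)]
    · simp only [kk, if_neg h]
  calc ∏ p : P × Fin m, Nat.card {s : Finset (ZMod (f p.1)) // s.card = kk f p.1 p.2}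
      = ∏ p : P × Fin m, (f p.1).choose (f p.1 / 2) := Finset.prod_congr rfl (fun p _ => hfac p)
    _ = ∏ v : P, ∏ _i : Fin m, (f v).choose (f v / 2) := Fintype.prod_prod_type _
    _ = ∏ v : P, ((f v).choose (f v / 2)) ^ m := by
        refine Finset.prod_congr rfl (fun v _ => ?_)
        rw [Finset.prod_const, Finset.card_univ, Fintype.card_fin]
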